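/- arXiv:2511.22816 — 11 statements merged into one kernel-verified Lean document; each statement's English description precedes it below -/
import Mathlib

section
/- For every c ∈ (0,1), σ > 0 and λ ∈ ℝ, the Lindley posterior probability P(n) = c·exp(−λ²/2) / (c·exp(−λ²/2) + (1−c)·σ·√(2π/n)) tends to 1 as n → ∞ (with n ranging over the positive integers or positive reals). -/
open Real Filter

/-- For every c ∈ (0,1), σ > 0 and λ ∈ ℝ, the Lindley posterior probability
P(n) = c·exp(−λ²/2) / (c·exp(−λ²/2) + (1−c)·σ·√(2π/n)) tends to 1 as n → ∞. -/
theorem lindley_posterior_tendsto_one (c σ lam : ℝ)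
    (hc : c ∈ Set.Ioo (0 : ℝ) 1) (hσ : 0 < σ) :
    Tendsto (fun n : ℝ =>
        c * Real.exp (-lam ^ 2 / 2) /
          (c * Real.exp (-lam ^ 2 / 2) + (1 - c) * σ * Real.sqrt (2 * π / n)))
      atTop (nhds 1) := by
  set A := c * Real.exp (-lam ^ 2 / 2) with hA
  have hApos : 0 < A := mul_pos hc.1 (Real.exp_pos _)
  have h1 : Tendsto (fun n : ℝ => 2 * π / n) atTop (nhds 0) :=
    Tendsto.div_atTop tendsto_const_nhds tendsto_id
  have h2 : Tendsto (fun n : ℝ => Real.sqrt (2 * π / n)) atTop (nhds 0) := by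
    simpa [Function.comp_def] using (Real.continuous_sqrt.continuousAt (x := (0 : ℝ))).tendsto.comp h1
  have h3 : Tendsto (fun n : ℝ => A + (1 - c) * σ * Real.sqrt (2 * π / n)) atTop (nhds A) := by
    have := (tendsto_const_nhds (x := A)).add (h2.const_mul ((1 - c) * σ))
    simpa using this
  have := (tendsto_const_nhds (x := A)).div h3 (ne_of_gt hApos)
  simpa [div_self (ne_of_gt hApos), Pi.div_def] using this
end

section
/- Let α ∈ (0,1), let z > 0 satisfy 2·(1 − Φ(z)) = α where Φ is the standard normal cumulative distribution function, and let c ∈ (0,1), σ > 0. Then there exists N such that for all n ≥ N, c·exp(−z²/2) / (c·exp(−z²/2) + (1−c)·σ·√(2π/n)) > 1 − α. Thus, for data that are exactly significant at level α for every n, the Bayesian posterior probability of the point null eventually exceeds 1 − α. -/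
open Real Filter

/-- The standard normal cumulative distribution function Φ. -/
noncomputable def stdNormalCDF (z : ℝ) : ℝ :=
  ∫ t in Set.Iic z, (Real.sqrt (2 * Real.pi))⁻¹ * Real.exp (-t ^ 2 / 2)

/-- Let α ∈ (0,1), let z > 0 satisfy 2·(1 − Φ(z)) = α, and let c ∈ (0,1), σ > 0.
Then there exists N such that for all n ≥ N, the Lindley posterior probability of the point
null at data just significant at level α exceeds 1 − α. -/
theorem jeffreys_lindley_paradox (α z c σ : ℝ)
    (hα : α ∈ Set.Ioo (0 : ℝ) 1) (hz : 0 < z) (hzα : 2 * (1 - stdNormalCDF z) = α)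
    (hc : c ∈ Set.Ioo (0 : ℝ) 1) (hσ : 0 < σ) :
    ∃ N : ℕ, ∀ n : ℕ, N ≤ n →
      c * Real.exp (-z ^ 2 / 2) /
          (c * Real.exp (-z ^ 2 / 2) + (1 - c) * σ * Real.sqrt (2 * π / (n : ℝ))) > 1 - α := by
  set A : ℝ := c * Real.exp (-z ^ 2 / 2) with hAdef
  have hA : 0 < A := mul_pos hc.1 (Real.exp_pos _)
  have h1α : 0 < 1 - α := by linarith [hα.2]
  have hd : 0 < A * α / (1 - α) := div_pos (mul_pos hA hα.1) h1α
  have hT : Tendsto (fun n : ℕ => (1 - c) * σ * Real.sqrt (2 * π / (n : ℝ)))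
      atTop (nhds 0) := by
    have h1 : Tendsto (fun n : ℕ => 2 * π / (n : ℝ)) atTop (nhds 0) :=
      tendsto_const_nhds.div_atTop tendsto_natCast_atTop_atTop
    have h2 : Tendsto (fun n : ℕ => Real.sqrt (2 * π / (n : ℝ))) atTop (nhds 0) := by
      have h := (Real.continuous_sqrt.tendsto 0).comp h1
      rw [Real.sqrt_zero] at h
      exact h
    simpa using h2.const_mul ((1 - c) * σ)
  have hev : ∀ᶠ n : ℕ in atTop,
      (1 - c) * σ * Real.sqrt (2 * π / (n : ℝ)) < A * α / (1 - α) :=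
    hT.eventually (gt_mem_nhds hd)
  obtain ⟨N, hN⟩ := eventually_atTop.1 hev
  refine ⟨N, fun n hn => ?_⟩
  have hBlt := hN n hn
  set B : ℝ := (1 - c) * σ * Real.sqrt (2 * π / (n : ℝ)) with hBdef
  have hB0 : 0 ≤ B := by
    apply mul_nonneg (mul_nonneg (by linarith [hc.2]) hσ.le) (Real.sqrt_nonneg _)
  have hden : 0 < A + B := by linarith
  rw [gt_iff_lt, lt_div_iff₀ hden]
  have h3 : B * (1 - α) < A * α := (lt_div_iff₀ h1α).mp hBlt
  nlinarith
end

section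
/- For every c ∈ (0,1), σ > 0, n > 0 and every λ ∈ ℝ (i.e., for any fixed data), the Bartlett-corrected posterior probability c·exp(−λ²/2) / (c·exp(−λ²/2) + ((1−c)/I)·σ·√(2π/n)) tends to 1 as the prior interval width I → ∞. -/
open Real Filter

/-- For every c ∈ (0,1), σ > 0, n > 0 and λ ∈ ℝ (fixed data), the
Bartlett-corrected posterior probability
c·exp(−λ²/2) / (c·exp(−λ²/2) + ((1−c)/I)·σ·√(2π/n)) tends to 1 as I → ∞
(Bartlett's Anomaly). -/
theorem bartlett_anomaly (c σ n lam : ℝ)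
    (hc : c ∈ Set.Ioo (0 : ℝ) 1) (hσ : 0 < σ) (hn : 0 < n) :
    Tendsto (fun I : ℝ =>
        c * Real.exp (-lam ^ 2 / 2) /
          (c * Real.exp (-lam ^ 2 / 2) + ((1 - c) / I) * σ * Real.sqrt (2 * π / n)))
      atTop (nhds 1) := by
  set A := c * Real.exp (-lam ^ 2 / 2) with hA
  have hApos : 0 < A := mul_pos hc.1 (Real.exp_pos _)
  have h0 : Tendsto (fun I : ℝ => ((1 - c) / I) * σ * Real.sqrt (2 * π / n))
      atTop (nhds 0) := by
    have : Tendsto (fun I : ℝ => (1 - c) / I) atTop (nhds 0) :=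
      tendsto_const_nhds.div_atTop tendsto_id
    simpa using (this.mul_const σ).mul_const (Real.sqrt (2 * π / n))
  have hden : Tendsto (fun I : ℝ => A + ((1 - c) / I) * σ * Real.sqrt (2 * π / n))
      atTop (nhds A) := by simpa using tendsto_const_nhds.add h0
  have := (tendsto_const_nhds (x := A)).div hden hApos.ne'
  rw [div_self hApos.ne'] at this
  exact this
end

section
/- For every τ > 0 and z ∈ ℝ, the normal-conjugate Bayes factor in favor of the point null, B₀₁(n) = √(1 + n·τ²) · exp(−z²·n·τ² / (2·(1 + n·τ²))), tends to +∞ as n → ∞. -/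
open Real Filter

/-- For every τ > 0 and z ∈ ℝ, the normal-conjugate Bayes factor in favor of
the point null, B₀₁(n) = √(1 + n·τ²)·exp(−z²·n·τ²/(2·(1 + n·τ²))), tends to +∞ as n → ∞. -/
theorem conjugate_bayes_factor_tendsto_atTop (τ z : ℝ) (hτ : 0 < τ) :
    Tendsto (fun n : ℝ =>
        Real.sqrt (1 + n * τ ^ 2) *
          Real.exp (-(z ^ 2) * (n * τ ^ 2) / (2 * (1 + n * τ ^ 2))))
      atTop atTop := by
  have hτ2 : 0 < τ ^ 2 := pow_pos hτ 2
  have hmul : Tendsto (fun n : ℝ => n * τ ^ 2) atTop atTop :=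
    tendsto_id.atTop_mul_const hτ2
  have hadd : Tendsto (fun n : ℝ => 1 + n * τ ^ 2) atTop atTop :=
    tendsto_atTop_add_const_left _ 1 hmul
  have hsqrtfun : Tendsto Real.sqrt atTop atTop := by
    refine (tendsto_rpow_atTop (by norm_num : (0:ℝ) < 1/2)).congr' ?_
    filter_upwards [eventually_ge_atTop 0] with x hx
    rw [Real.sqrt_eq_rpow]
  have hsqrt : Tendsto (fun n : ℝ => Real.sqrt (1 + n * τ ^ 2)) atTop atTop :=
    hsqrtfun.comp hadd
  -- ratio tends to 1
  have hinv : Tendsto (fun n : ℝ => (1 + n * τ ^ 2)⁻¹) atTop (nhds 0) :=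
    tendsto_inv_atTop_zero.comp hadd
  have hratio : Tendsto (fun n : ℝ => (n * τ ^ 2) / (1 + n * τ ^ 2)) atTop (nhds 1) := by
    have h1 : Tendsto (fun n : ℝ => 1 - (1 + n * τ ^ 2)⁻¹) atTop (nhds 1) := by
      simpa using (tendsto_const_nhds (x := (1:ℝ))).sub hinv
    refine h1.congr' ?_
    filter_upwards [eventually_gt_atTop 0] with n hn
    have hpos : (0:ℝ) < 1 + n * τ ^ 2 := by positivity
    field_simp
    ring
  have hexpo : Tendsto (fun n : ℝ => -(z ^ 2) * (n * τ ^ 2) / (2 * (1 + n * τ ^ 2)))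
      atTop (nhds (-(z ^ 2) / 2)) := by
    have h := hratio.const_mul (-(z ^ 2) / 2)
    rw [mul_one] at h
    refine h.congr' ?_
    filter_upwards [eventually_gt_atTop 0] with n hn
    have hpos : (0:ℝ) < 1 + n * τ ^ 2 := by positivity
    field_simp
  have hexp : Tendsto (fun n : ℝ => Real.exp (-(z ^ 2) * (n * τ ^ 2) / (2 * (1 + n * τ ^ 2))))
      atTop (nhds (Real.exp (-(z ^ 2) / 2))) :=
    (Real.continuous_exp.tendsto _).comp hexpo
  exact hsqrt.atTop_mul_pos (Real.exp_pos _) hexp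
end

section
/- For every τ > 0 and z ∈ ℝ, the function t ↦ √(1 + t·τ²) · exp(−z²·t·τ² / (2·(1 + t·τ²))) is strictly increasing on the set of t > 0 satisfying 1 + t·τ² > z², and strictly decreasing on the set of t > 0 satisfying 1 + t·τ² < z². -/
open Real Filter

lemma bf_hasDerivAt (τ z t : ℝ) (hτ : 0 < τ) (ht : 0 < t) :
    HasDerivAt (fun t : ℝ =>
        Real.sqrt (1 + t * τ ^ 2) *
          Real.exp (-(z ^ 2) * (t * τ ^ 2) / (2 * (1 + t * τ ^ 2))))
      (Real.exp (-(z ^ 2) * (t * τ ^ 2) / (2 * (1 + t * τ ^ 2))) *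
        (τ ^ 2 * ((1 + t * τ ^ 2) - z ^ 2)) /
        (2 * Real.sqrt (1 + t * τ ^ 2) * (1 + t * τ ^ 2))) t := by
  have hu : (0:ℝ) < 1 + t * τ ^ 2 := by positivity
  have hus : 0 < Real.sqrt (1 + t * τ ^ 2) := Real.sqrt_pos.2 hu
  have h1 : HasDerivAt (fun t : ℝ => 1 + t * τ ^ 2) (τ ^ 2) t := by
    simpa using ((hasDerivAt_id t).mul_const (τ ^ 2)).const_add 1
  have hsq : HasDerivAt (fun t : ℝ => Real.sqrt (1 + t * τ ^ 2))
      (1 / (2 * Real.sqrt (1 + t * τ ^ 2)) * τ ^ 2) t := by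
    simpa [Function.comp_def] using (Real.hasDerivAt_sqrt (ne_of_gt hu)).comp t h1
  have hnum : HasDerivAt (fun t : ℝ => -(z ^ 2) * (t * τ ^ 2)) (-(z ^ 2) * τ ^ 2) t := by
    simpa [mul_assoc] using ((hasDerivAt_id t).mul_const (τ ^ 2)).const_mul (-(z ^ 2))
  have hden : HasDerivAt (fun t : ℝ => 2 * (1 + t * τ ^ 2)) (2 * τ ^ 2) t := h1.const_mul 2
  have hdne : 2 * (1 + t * τ ^ 2) ≠ 0 := by positivity
  have hquot := hnum.div hden hdne
  have hexp := hquot.exp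
  have hmain := hsq.mul hexp
  convert hmain using 1
  · rfl
  · rfl
  · rfl
  simp only [Pi.div_apply]
  have hs2 : Real.sqrt (1 + t * τ ^ 2) * Real.sqrt (1 + t * τ ^ 2) = 1 + t * τ ^ 2 :=
    Real.mul_self_sqrt hu.le
  set s := Real.sqrt (1 + t * τ ^ 2) with hsdef
  field_simp
  ring_nf
  linear_combination z ^ 2 * hs2

/-- For every τ > 0 and z ∈ ℝ, the function
t ↦ √(1 + t·τ²)·exp(−z²·t·τ²/(2·(1 + t·τ²))) is strictly increasing on
{t > 0 | 1 + t·τ² > z²} and strictly decreasing on {t > 0 | 1 + t·τ² < z²}. -/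
theorem conjugate_bayes_factor_monotonicity (τ z : ℝ) (hτ : 0 < τ) :
    StrictMonoOn (fun t : ℝ =>
        Real.sqrt (1 + t * τ ^ 2) *
          Real.exp (-(z ^ 2) * (t * τ ^ 2) / (2 * (1 + t * τ ^ 2))))
      {t : ℝ | 0 < t ∧ z ^ 2 < 1 + t * τ ^ 2} ∧
    StrictAntiOn (fun t : ℝ =>
        Real.sqrt (1 + t * τ ^ 2) *
          Real.exp (-(z ^ 2) * (t * τ ^ 2) / (2 * (1 + t * τ ^ 2))))
      {t : ℝ | 0 < t ∧ 1 + t * τ ^ 2 < z ^ 2} := by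
  have hτ2 : (0:ℝ) < τ ^ 2 := by positivity
  have hset1 : {t : ℝ | 0 < t ∧ z ^ 2 < 1 + t * τ ^ 2}
      = Set.Ioi 0 ∩ Set.Ioi ((z ^ 2 - 1) / τ ^ 2) := by
    ext t
    simp only [Set.mem_setOf_eq, Set.mem_inter_iff, Set.mem_Ioi, div_lt_iff₀ hτ2]
    constructor <;> rintro ⟨h1, h2⟩ <;> exact ⟨h1, by linarith⟩
  have hset2 : {t : ℝ | 0 < t ∧ 1 + t * τ ^ 2 < z ^ 2}
      = Set.Ioi 0 ∩ Set.Iio ((z ^ 2 - 1) / τ ^ 2) := by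
    ext t
    simp only [Set.mem_setOf_eq, Set.mem_inter_iff, Set.mem_Ioi, Set.mem_Iio, lt_div_iff₀ hτ2]
    constructor <;> rintro ⟨h1, h2⟩ <;> exact ⟨h1, by linarith⟩
  constructor
  · rw [hset1]
    apply strictMonoOn_of_deriv_pos ((convex_Ioi _).inter (convex_Ioi _))
    · intro t ht
      exact (bf_hasDerivAt τ z t hτ ht.1).continuousAt.continuousWithinAt
    · intro t ht
      rw [interior_eq_iff_isOpen.mpr (isOpen_Ioi.inter isOpen_Ioi)] at ht
      obtain ⟨ht0, htz⟩ := ht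
      rw [Set.mem_Ioi] at ht0 htz
      rw [div_lt_iff₀ hτ2] at htz
      rw [(bf_hasDerivAt τ z t hτ ht0).deriv]
      have hu : (0:ℝ) < 1 + t * τ ^ 2 := by positivity
      have hzu : z ^ 2 < 1 + t * τ ^ 2 := by linarith
      apply div_pos
      · apply mul_pos (Real.exp_pos _)
        apply mul_pos hτ2
        linarith
      · positivity
  · rw [hset2]
    apply strictAntiOn_of_deriv_neg ((convex_Ioi _).inter (convex_Iio _))
    · intro t ht
      exact (bf_hasDerivAt τ z t hτ ht.1).continuousAt.continuousWithinAt
    · intro t ht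
      rw [interior_eq_iff_isOpen.mpr (isOpen_Ioi.inter isOpen_Iio)] at ht
      obtain ⟨ht0, htz⟩ := ht
      rw [Set.mem_Ioi] at ht0
      rw [Set.mem_Iio, lt_div_iff₀ hτ2] at htz
      rw [(bf_hasDerivAt τ z t hτ ht0).deriv]
      have hu : (0:ℝ) < 1 + t * τ ^ 2 := by positivity
      have hus : 0 < Real.sqrt (1 + t * τ ^ 2) := Real.sqrt_pos.2 hu
      apply div_neg_of_neg_of_pos
      · apply mul_neg_of_pos_of_neg (Real.exp_pos _)
        apply mul_neg_of_pos_of_neg hτ2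
        linarith
      · positivity
end

section
/- For every n > 0 and z ∈ ℝ, the normal-conjugate Bayes factor in favor of the point null, B₀₁(τ) = √(1 + n·τ²) · exp(−z²·n·τ² / (2·(1 + n·τ²))), tends to +∞ as the prior scale τ → ∞. Consequently, with equal prior odds, the posterior probability B₀₁/(1 + B₀₁) of the null tends to 1 as τ → ∞, regardless of the observed data z. -/
open Real Filter

lemma aux_ratio_to_one : Tendsto (fun x : ℝ => x / (1 + x)) atTop (nhds 1) := by
  have h0 : Tendsto (fun x : ℝ => 1 / (1 + x)) atTop (nhds 0) :=
    Tendsto.comp tendsto_inv_atTop_zero (by simpa using tendsto_atTop_add_const_left atTop 1 tendsto_id) |>.congr (fun x => by simp [one_div])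
  have h : Tendsto (fun x : ℝ => 1 - 1 / (1 + x)) atTop (nhds (1 - 0)) :=
    tendsto_const_nhds.sub h0
  rw [sub_zero] at h
  refine h.congr' ?_
  filter_upwards [eventually_gt_atTop (0:ℝ)] with x hx
  have hx1 : (1 : ℝ) + x ≠ 0 := by linarith
  field_simp
  ring

/-- For every n > 0 and z ∈ ℝ, the normal-conjugate Bayes factor
B₀₁(τ) = √(1 + n·τ²)·exp(−z²·n·τ²/(2·(1 + n·τ²))) tends to +∞ as τ → ∞, and consequently
with equal prior odds the posterior probability B₀₁/(1 + B₀₁) of the null tends to 1 as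
τ → ∞, regardless of the observed data z (Bartlett's Anomaly). -/
theorem bartlett_anomaly_conjugate (n z : ℝ) (hn : 0 < n) :
    Tendsto (fun τ : ℝ =>
        Real.sqrt (1 + n * τ ^ 2) *
          Real.exp (-(z ^ 2) * (n * τ ^ 2) / (2 * (1 + n * τ ^ 2))))
      atTop atTop ∧
    Tendsto (fun τ : ℝ =>
        (Real.sqrt (1 + n * τ ^ 2) *
            Real.exp (-(z ^ 2) * (n * τ ^ 2) / (2 * (1 + n * τ ^ 2)))) /
          (1 + Real.sqrt (1 + n * τ ^ 2) *
            Real.exp (-(z ^ 2) * (n * τ ^ 2) / (2 * (1 + n * τ ^ 2)))))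
      atTop (nhds 1) := by
  have hbase : Tendsto (fun τ : ℝ => 1 + n * τ ^ 2) atTop atTop := by
    apply tendsto_atTop_add_const_left
    exact (tendsto_pow_atTop (by norm_num)).const_mul_atTop hn
  have hsqrt : Tendsto (fun τ : ℝ => Real.sqrt (1 + n * τ ^ 2)) atTop atTop := by
    rw [tendsto_atTop]
    intro b
    filter_upwards [hbase.eventually_ge_atTop (b ^ 2)] with τ hτ
    calc b ≤ |b| := le_abs_self b
      _ = Real.sqrt (b ^ 2) := (Real.sqrt_sq_eq_abs b).symm
      _ ≤ _ := Real.sqrt_le_sqrt hτ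
  -- exponent tends to -(z^2)/2
  have hinv : Tendsto (fun τ : ℝ => 1 / (1 + n * τ ^ 2)) atTop (nhds 0) := by
    simpa [one_div, Function.comp_def] using tendsto_inv_atTop_zero.comp hbase
  have hratio : Tendsto (fun τ : ℝ => (n * τ ^ 2) / (1 + n * τ ^ 2)) atTop (nhds 1) := by
    have h : Tendsto (fun τ : ℝ => 1 - 1 / (1 + n * τ ^ 2)) atTop (nhds (1 - 0)) :=
      tendsto_const_nhds.sub hinv
    rw [sub_zero] at h
    refine h.congr' ?_
    filter_upwards [eventually_gt_atTop (0:ℝ)] with τ hτ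
    have hpos : (0:ℝ) < 1 + n * τ ^ 2 := by positivity
    field_simp
    ring
  have harg : Tendsto (fun τ : ℝ => -(z ^ 2) * (n * τ ^ 2) / (2 * (1 + n * τ ^ 2)))
      atTop (nhds (-(z ^ 2) / 2)) := by
    have h := (tendsto_const_nhds (x := -(z ^ 2) / 2)).mul hratio
    rw [mul_one] at h
    refine h.congr fun τ => ?_
    have hpos : (0:ℝ) < 1 + n * τ ^ 2 := by positivity
    field_simp
  have hexp : Tendsto (fun τ : ℝ =>
      Real.exp (-(z ^ 2) * (n * τ ^ 2) / (2 * (1 + n * τ ^ 2)))) atTop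
      (nhds (Real.exp (-(z ^ 2) / 2))) :=
    (Real.continuous_exp.tendsto _).comp harg
  have hB : Tendsto (fun τ : ℝ =>
      Real.sqrt (1 + n * τ ^ 2) *
        Real.exp (-(z ^ 2) * (n * τ ^ 2) / (2 * (1 + n * τ ^ 2)))) atTop atTop :=
    hsqrt.atTop_mul_pos (Real.exp_pos _) hexp
  exact ⟨hB, aux_ratio_to_one.comp hB⟩
end

section
/- Let α ∈ (0, 1/2), let z > 0 satisfy 2·(1 − Φ(z)) = α with Φ the standard normal CDF, and let τ > 0. Then there exists N such that for all n ≥ N, the equal-prior-odds posterior probability B₀₁(n)/(1 + B₀₁(n)) exceeds 1 − α, where B₀₁(n) = √(1 + n·τ²) · exp(−z²·n·τ² / (2·(1 + n·τ²))). Equivalently, B₀₁(n) > (1 − α)/α for all n ≥ N. -/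
open Real Filter

/-- Let α ∈ (0,1/2), z > 0 with 2·(1 − Φ(z)) = α, τ > 0.  Then there is N
such that for all n ≥ N the equal-prior-odds posterior probability B₀₁(n)/(1 + B₀₁(n))
exceeds 1 − α, where B₀₁(n) = √(1 + n·τ²)·exp(−z²·n·τ²/(2·(1 + n·τ²))); equivalently,
B₀₁(n) > (1 − α)/α for all n ≥ N. -/
theorem jeffreys_lindley_conjugate (α z τ : ℝ)
    (hα : α ∈ Set.Ioo (0 : ℝ) (1 / 2)) (hz : 0 < z)
    (hzα : 2 * (1 - stdNormalCDF z) = α) (hτ : 0 < τ) :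
    ∃ N : ℕ, ∀ n : ℕ, N ≤ n →
      (Real.sqrt (1 + (n : ℝ) * τ ^ 2) *
          Real.exp (-(z ^ 2) * ((n : ℝ) * τ ^ 2) / (2 * (1 + (n : ℝ) * τ ^ 2)))) /
        (1 + Real.sqrt (1 + (n : ℝ) * τ ^ 2) *
          Real.exp (-(z ^ 2) * ((n : ℝ) * τ ^ 2) / (2 * (1 + (n : ℝ) * τ ^ 2)))) > 1 - α ∧
      Real.sqrt (1 + (n : ℝ) * τ ^ 2) *
          Real.exp (-(z ^ 2) * ((n : ℝ) * τ ^ 2) / (2 * (1 + (n : ℝ) * τ ^ 2))) >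
        (1 - α) / α := by
  obtain ⟨hα0, hα2⟩ := hα
  have hα1 : α < 1 := hα2.trans (by norm_num)
  have h1α : 0 < 1 - α := by linarith
  set C : ℝ := (1 - α) / α * Real.exp (z ^ 2 / 2) with hC
  have hCpos : 0 < C := by positivity
  obtain ⟨N, hN⟩ := exists_nat_gt (C ^ 2 / τ ^ 2)
  refine ⟨N, fun n hn => ?_⟩
  set t : ℝ := (n : ℝ) * τ ^ 2 with ht
  have ht0 : 0 ≤ t := by positivity
  have ht1 : (0:ℝ) < 1 + t := by linarith
  have hNn : (N : ℝ) ≤ n := Nat.cast_le.mpr hn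
  have htC : C ^ 2 < 1 + t := by
    rw [div_lt_iff₀ (by positivity)] at hN
    have : (N : ℝ) * τ ^ 2 ≤ t := by
      rw [ht]; exact mul_le_mul_of_nonneg_right hNn (by positivity)
    linarith
  have hsq : C < Real.sqrt (1 + t) := by
    rw [show C = Real.sqrt (C ^ 2) from (Real.sqrt_sq hCpos.le).symm]
    exact Real.sqrt_lt_sqrt (by positivity) htC
  have hexp : Real.exp (-(z ^ 2) / 2) ≤ Real.exp (-(z ^ 2) * t / (2 * (1 + t))) := by
    apply Real.exp_le_exp.mpr
    rw [div_le_div_iff₀ (by norm_num) (by positivity)]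
    nlinarith [sq_nonneg z]
  have hB : Real.sqrt (1 + t) * Real.exp (-(z ^ 2) * t / (2 * (1 + t))) > (1 - α) / α := by
    have h1 : C * Real.exp (-(z ^ 2) / 2) = (1 - α) / α := by
      rw [hC, mul_assoc, ← Real.exp_add, show z ^ 2 / 2 + -z ^ 2 / 2 = 0 by ring,
        Real.exp_zero, mul_one]
    calc (1 - α) / α = C * Real.exp (-(z ^ 2) / 2) := h1.symm
      _ < Real.sqrt (1 + t) * Real.exp (-(z ^ 2) / 2) := by
          exact mul_lt_mul_of_pos_right hsq (Real.exp_pos _)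
      _ ≤ Real.sqrt (1 + t) * Real.exp (-(z ^ 2) * t / (2 * (1 + t))) := by
          exact mul_le_mul_of_nonneg_left hexp (Real.sqrt_nonneg _)
  refine ⟨?_, hB⟩
  set B : ℝ := Real.sqrt (1 + t) * Real.exp (-(z ^ 2) * t / (2 * (1 + t))) with hBdef
  have hBpos : 0 < B := by positivity
  rw [gt_iff_lt, lt_div_iff₀ (by linarith : (0:ℝ) < 1 + B)]
  rw [gt_iff_lt, div_lt_iff₀ hα0] at hB
  nlinarith
end

section
/- For every σ > 0, I > 0 and z ∈ ℝ, the integral ∫_{−I/2}^{I/2} √(n/(2πσ²)) · exp(−n·(z·σ/√n − u)² / (2σ²)) du converges to 1 as n → ∞. Consequently, the marginal likelihood under the uniform alternative, (1/I)·∫_{−I/2}^{I/2} √(n/(2πσ²)) · exp(−n·(z·σ/√n − u)²/(2σ²)) du, converges to 1/I. -/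
open Real Filter MeasureTheory

/-- For every σ > 0, I > 0 and z ∈ ℝ, the integral
∫_{−I/2}^{I/2} √(n/(2πσ²))·exp(−n·(z·σ/√n − u)²/(2σ²)) du converges to 1 as n → ∞;
consequently the marginal likelihood under the uniform alternative,
(1/I) times this integral, converges to 1/I. -/
theorem laplace_marginal_uniform (σ I z : ℝ) (hσ : 0 < σ) (hI : 0 < I) :
    Tendsto (fun n : ℝ =>
        ∫ u in (-(I / 2))..(I / 2),
          Real.sqrt (n / (2 * π * σ ^ 2)) *
            Real.exp (-n * (z * σ / Real.sqrt n - u) ^ 2 / (2 * σ ^ 2)))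
      atTop (nhds 1) ∧
    Tendsto (fun n : ℝ =>
        (1 / I) * ∫ u in (-(I / 2))..(I / 2),
          Real.sqrt (n / (2 * π * σ ^ 2)) *
            Real.exp (-n * (z * σ / Real.sqrt n - u) ^ 2 / (2 * σ ^ 2)))
      atTop (nhds (1 / I)) := by
  have h2π : (0:ℝ) < 2 * π := by positivity
  set g : ℝ → ℝ := fun t => Real.exp (-(1/2) * t ^ 2) with hg
  have hgint : Integrable g := integrable_exp_neg_mul_sq (by norm_num)
  have hgtot : ∫ t : ℝ, g t = Real.sqrt (2 * π) := by
    rw [hg, integral_gaussian, div_div_eq_mul_div, div_one, mul_comm]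
  have key : Tendsto (fun n : ℝ =>
        ∫ u in (-(I / 2))..(I / 2),
          Real.sqrt (n / (2 * π * σ ^ 2)) *
            Real.exp (-n * (z * σ / Real.sqrt n - u) ^ 2 / (2 * σ ^ 2)))
      atTop (nhds 1) := by
    have heq : ∀ᶠ n : ℝ in atTop, (∫ u in (-(I / 2))..(I / 2),
          Real.sqrt (n / (2 * π * σ ^ 2)) *
            Real.exp (-n * (z * σ / Real.sqrt n - u) ^ 2 / (2 * σ ^ 2)))
        = (Real.sqrt (2 * π))⁻¹ *
          ∫ t in (Real.sqrt n / σ * (-(I/2)) - z)..(Real.sqrt n / σ * (I/2) - z), g t := by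
      filter_upwards [eventually_gt_atTop 0] with n hn
      have hsn : 0 < Real.sqrt n := Real.sqrt_pos.2 hn
      set c : ℝ := Real.sqrt n / σ with hc
      have hcpos : 0 < c := by positivity
      have hsub : ∀ u : ℝ, Real.exp (-n * (z * σ / Real.sqrt n - u) ^ 2 / (2 * σ ^ 2))
          = g (c * u - z) := by
        intro u
        have hnn : Real.sqrt n * Real.sqrt n = n := Real.mul_self_sqrt hn.le
        rw [hg]
        congr 1
        field_simp [hc]
        rw [hc, Real.sq_sqrt hn.le]
        field_simp
        ring
      have hcoef : Real.sqrt (n / (2 * π * σ ^ 2)) = c / Real.sqrt (2 * π) := by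
        have h1 : n / (2 * π * σ ^ 2) = (c / Real.sqrt (2 * π)) ^ 2 := by
          rw [hc, div_pow, div_pow, Real.sq_sqrt hn.le, Real.sq_sqrt h2π.le]
          ring
        rw [h1, Real.sqrt_sq (by positivity)]
      simp_rw [hsub, hcoef]
      rw [intervalIntegral.integral_const_mul,
        intervalIntegral.integral_comp_mul_sub g (ne_of_gt hcpos) z, smul_eq_mul]
      field_simp
    have hsq : Tendsto Real.sqrt atTop atTop :=
      tendsto_atTop_atTop.2 fun b => ⟨b ^ 2, fun a ha => by
        calc b ≤ |b| := le_abs_self b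
        _ = Real.sqrt (b ^ 2) := (Real.sqrt_sq_eq_abs b).symm
        _ ≤ Real.sqrt a := Real.sqrt_le_sqrt ha⟩
    have hb : Tendsto (fun n : ℝ => Real.sqrt n / σ * (I/2) - z) atTop atTop := by
      apply tendsto_atTop_add_const_right
      exact (hsq.atTop_div_const hσ).atTop_mul_const (by positivity)
    have ha : Tendsto (fun n : ℝ => Real.sqrt n / σ * (-(I/2)) - z) atTop atBot := by
      apply tendsto_atBot_add_const_right
      have := (hsq.atTop_div_const hσ).atTop_mul_const (show (0:ℝ) < I/2 by positivity)
      simpa [mul_neg] using this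
    have hmain := intervalIntegral_tendsto_integral hgint ha hb
    rw [hgtot] at hmain
    have := hmain.const_mul (Real.sqrt (2 * π))⁻¹
    rw [inv_mul_cancel₀ (by positivity : Real.sqrt (2*π) ≠ 0)] at this
    exact this.congr' (heq.mono fun n h => h.symm)
  exact ⟨key, by simpa using key.const_mul (1 / I)⟩
end

section
/- Let σ > 0, δ > 0, z ∈ ℝ, θ₀ ∈ ℝ, and let π₀ : ℝ → ℝ be nonnegative, integrable, and continuous at θ₀. Set x̄ₙ = θ₀ + z·σ/√n. Then √n · ∫_{θ₀−δ}^{θ₀+δ} exp(−n·(x̄ₙ − θ)²/(2σ²)) · π₀(θ) dθ converges to σ·√(2π)·π₀(θ₀) as n → ∞. In particular, the numerator of the interval-null Bayes factor is of order n^{−1/2}. -/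
open Real Filter MeasureTheory

lemma gauss_shift_integral (b c : ℝ) :
    ∫ θ : ℝ, Real.exp (-b * (θ - c) ^ 2) = Real.sqrt (π / b) := by
  rw [← integral_gaussian b]
  exact integral_sub_right_eq_self (fun θ : ℝ => Real.exp (-b * θ ^ 2)) c

lemma gauss_shift_integrable {b : ℝ} (hb : 0 < b) (c : ℝ) :
    Integrable (fun θ : ℝ => Real.exp (-b * (θ - c) ^ 2)) :=
  (integrable_exp_neg_mul_sq hb).comp_sub_right c

lemma sqrt_mul_exp_tendsto {c : ℝ} (hc : 0 < c) :
    Tendsto (fun n : ℝ => Real.sqrt n * Real.exp (-(c * n))) atTop (nhds 0) := by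
  have h1 : Tendsto (fun n : ℝ => c * n) atTop atTop :=
    Tendsto.const_mul_atTop hc tendsto_id
  have h2 : Tendsto (fun n : ℝ => c⁻¹ * ((c * n) ^ 1 * Real.exp (-(c * n)))) atTop (nhds 0) := by
    have := ((tendsto_pow_mul_exp_neg_atTop_nhds_zero 1).comp h1).const_mul c⁻¹
    simpa using this
  apply squeeze_zero' (f := fun n : ℝ => Real.sqrt n * Real.exp (-(c * n)))
    (g := fun n : ℝ => c⁻¹ * ((c * n) ^ 1 * Real.exp (-(c * n))))
  · filter_upwards with n; positivity
  · filter_upwards [eventually_ge_atTop (1 : ℝ)] with n hn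
    have hsn : Real.sqrt n ≤ n := by
      calc Real.sqrt n ≤ Real.sqrt (n ^ 2) := Real.sqrt_le_sqrt (by nlinarith)
      _ = n := Real.sqrt_sq (by linarith)
    have : c⁻¹ * ((c * n) ^ 1 * Real.exp (-(c * n))) = n * Real.exp (-(c * n)) := by
      field_simp
    rw [this]
    exact mul_le_mul_of_nonneg_right hsn (Real.exp_pos _).le
  · exact h2

set_option maxHeartbeats 1000000 in
/-- Let σ > 0, δ > 0, z ∈ ℝ, θ₀ ∈ ℝ, and let π₀ be nonnegative, integrable,
and continuous at θ₀.  With x̄ₙ = θ₀ + z·σ/√n,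
√n·∫_{θ₀−δ}^{θ₀+δ} exp(−n·(x̄ₙ − θ)²/(2σ²))·π₀(θ) dθ → σ·√(2π)·π₀(θ₀) as n → ∞. -/
theorem interval_null_numerator_asymptotics (σ δ z θ₀ : ℝ)
    (hσ : 0 < σ) (hδ : 0 < δ) (π₀ : ℝ → ℝ)
    (hπ₀nonneg : ∀ θ, 0 ≤ π₀ θ) (hπ₀int : Integrable π₀)
    (hπ₀cont : ContinuousAt π₀ θ₀) :
    Tendsto (fun n : ℝ =>
        Real.sqrt n * ∫ θ in (θ₀ - δ)..(θ₀ + δ),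
          Real.exp (-n * ((θ₀ + z * σ / Real.sqrt n) - θ) ^ 2 / (2 * σ ^ 2)) * π₀ θ)
      atTop (nhds (σ * Real.sqrt (2 * π) * π₀ θ₀)) := by
  have hσ2 : (0 : ℝ) < σ ^ 2 := by positivity
  set C : ℝ := σ * Real.sqrt (2 * π) with hCdef
  have hCpos : 0 < C := by
    have : (0:ℝ) < Real.sqrt (2 * π) := Real.sqrt_pos.mpr (by positivity)
    positivity
  set Ipi : ℝ := ∫ θ, π₀ θ with hIpidef
  have hIpinonneg : 0 ≤ Ipi := integral_nonneg hπ₀nonneg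
  rw [Metric.tendsto_nhds]
  intro ε hε
  set ε₀ : ℝ := ε / (6 * C) with hε₀def
  have hε₀pos : 0 < ε₀ := by positivity
  obtain ⟨η', hη'pos, hη'⟩ := Metric.continuousAt_iff.mp hπ₀cont ε₀ hε₀pos
  set η : ℝ := min (η' / 2) δ with hηdef
  have hηpos : 0 < η := lt_min (by positivity) hδ
  have hηδ : η ≤ δ := min_le_right _ _
  have hηη' : η < η' := lt_of_le_of_lt (min_le_left _ _) (by linarith)
  set c1 : ℝ := η ^ 2 / (8 * σ ^ 2) with hc1def
  set c2 : ℝ := η ^ 2 / (16 * σ ^ 2) with hc2def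
  have hc1 : 0 < c1 := by positivity
  have hc2 : 0 < c2 := by positivity
  set R1 : ℝ → ℝ := fun n => Real.sqrt n * Real.exp (-(c1 * n)) * Ipi with hR1def
  set R3 : ℝ → ℝ := fun n => π₀ θ₀ * (2 * σ * Real.sqrt π) * Real.exp (-(c2 * n)) with hR3def
  have hR1lim : Tendsto R1 atTop (nhds 0) := by
    have := (sqrt_mul_exp_tendsto hc1).mul_const Ipi
    simpa using this
  have hR3lim : Tendsto R3 atTop (nhds 0) := by
    have hexp : Tendsto (fun n : ℝ => Real.exp (-(c2 * n))) atTop (nhds 0) := by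
      apply Real.tendsto_exp_atBot.comp
      exact tendsto_neg_atBot_iff.mpr (Tendsto.const_mul_atTop hc2 tendsto_id)
    have := hexp.const_mul (π₀ θ₀ * (2 * σ * Real.sqrt π))
    simpa using this
  have hsmall : ∀ᶠ n in atTop, ε / 6 + (R1 n + R3 n) < ε := by
    have : Tendsto (fun n : ℝ => ε / 6 + (R1 n + R3 n)) atTop (nhds (ε / 6 + (0 + 0))) :=
      tendsto_const_nhds.add (hR1lim.add hR3lim)
    exact this.eventually_lt_const (by linarith)
  have hkey : ∀ᶠ n in atTop,
      dist (Real.sqrt n * ∫ θ in (θ₀ - δ)..(θ₀ + δ),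
          Real.exp (-n * ((θ₀ + z * σ / Real.sqrt n) - θ) ^ 2 / (2 * σ ^ 2)) * π₀ θ)
        (σ * Real.sqrt (2 * π) * π₀ θ₀) ≤ ε / 6 + (R1 n + R3 n) := by
    filter_upwards [eventually_ge_atTop (max 1 ((2 * |z| * σ / η) ^ 2))] with n hn
    have hn1 : (1 : ℝ) ≤ n := le_trans (le_max_left _ _) hn
    have hnpos : (0 : ℝ) < n := lt_of_lt_of_le one_pos hn1
    have hs : 0 < Real.sqrt n := Real.sqrt_pos.mpr hnpos
    set s : ℝ := Real.sqrt n with hsdef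
    set m : ℝ := θ₀ + z * σ / s with hmdef
    -- mean close to θ₀
    have hmclose : |m - θ₀| ≤ η / 2 := by
      have h2 : 2 * |z| * σ / η ≤ s := by
        rw [hsdef]
        calc 2 * |z| * σ / η = Real.sqrt ((2 * |z| * σ / η) ^ 2) :=
              (Real.sqrt_sq (by positivity)).symm
        _ ≤ Real.sqrt n := Real.sqrt_le_sqrt (le_trans (le_max_right _ _) hn)
      have hm0 : m - θ₀ = z * σ / s := by rw [hmdef]; ring
      rw [hm0, abs_div, abs_mul, abs_of_pos hσ, abs_of_pos hs, div_le_iff₀ hs]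
      have := (div_le_iff₀ hηpos).mp h2
      nlinarith
    set b : ℝ := n / (2 * σ ^ 2) with hbdef
    have hb : 0 < b := by positivity
    set f : ℝ → ℝ := fun θ => Real.exp (-b * (θ - m) ^ 2) with hfdef
    have hfnonneg : ∀ θ, 0 ≤ f θ := fun θ => (Real.exp_pos _).le
    have hfle1 : ∀ θ, f θ ≤ 1 := by
      intro θ
      rw [hfdef]
      simp only
      rw [Real.exp_le_one_iff]
      have : 0 ≤ b * (θ - m) ^ 2 := by positivity
      linarith
    have hfint : Integrable f := gauss_shift_integrable hb m
    have hfcont : Continuous f := by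
      rw [hfdef]; fun_prop
    have hfπint : Integrable (fun θ => f θ * π₀ θ) := by
      apply hπ₀int.bdd_mul (c := 1) hfcont.aestronglyMeasurable
      exact ae_of_all _ fun θ => by rw [Real.norm_eq_abs, abs_of_nonneg (hfnonneg θ)]; exact hfle1 θ
    -- total Gaussian mass
    have htotal : s * ∫ θ, f θ = C := by
      rw [hfdef]
      rw [gauss_shift_integral b m]
      have h1 : π / b = σ ^ 2 * (2 * π) / n := by
        rw [hbdef]; field_simp
      rw [h1, Real.sqrt_div (by positivity) n, Real.sqrt_mul (sq_nonneg σ),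
        Real.sqrt_sq hσ.le, hCdef, ← hsdef]
      field_simp
    -- sets
    set Jη : Set ℝ := Set.Ioc (θ₀ - η) (θ₀ + η) with hJηdef
    set Jδ : Set ℝ := Set.Ioc (θ₀ - δ) (θ₀ + δ) with hJδdef
    have hJsub : Jη ⊆ Jδ := Set.Ioc_subset_Ioc (by linarith) (by linarith)
    -- tail geometry
    have hgeom : ∀ θ : ℝ, θ ∉ Jη → η / 2 ≤ |θ - m| := by
      intro θ hθ
      rw [hJηdef, Set.mem_Ioc, not_and_or, not_lt, not_le] at hθ
      have h1 : η ≤ |θ - θ₀| := by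
        rcases hθ with h | h
        · exact le_abs.mpr (Or.inr (by linarith))
        · exact le_abs.mpr (Or.inl (by linarith))
      have h2 : |θ - θ₀| - |m - θ₀| ≤ |θ - m| := by
        have h := abs_sub_abs_le_abs_sub (θ - θ₀) (m - θ₀)
        rw [show θ - θ₀ - (m - θ₀) = θ - m by ring] at h
        exact h
      linarith
    have hsqbd : ∀ θ : ℝ, θ ∉ Jη → η ^ 2 / 4 ≤ (θ - m) ^ 2 := by
      intro θ hθ
      have h := hgeom θ hθ
      calc η ^ 2 / 4 = (η / 2) ^ 2 := by ring
      _ ≤ |θ - m| ^ 2 := pow_le_pow_left₀ (by positivity) h 2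
      _ = (θ - m) ^ 2 := sq_abs _
    have hfbd1 : ∀ θ : ℝ, θ ∉ Jη → f θ ≤ Real.exp (-(c1 * n)) := by
      intro θ hθ
      rw [hfdef]
      apply Real.exp_le_exp.mpr
      have h := hsqbd θ hθ
      have : b * (η ^ 2 / 4) ≤ b * (θ - m) ^ 2 := mul_le_mul_of_nonneg_left h hb.le
      have hbe : b * (η ^ 2 / 4) = c1 * n := by
        rw [hbdef, hc1def]; field_simp; ring
      rw [← hbe]
      linarith
    have hfbd2 : ∀ θ : ℝ, θ ∉ Jη →
        f θ ≤ Real.exp (-(c2 * n)) * Real.exp (-(b / 2) * (θ - m) ^ 2) := by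
      intro θ hθ
      rw [hfdef, ← Real.exp_add]
      apply Real.exp_le_exp.mpr
      have h := hsqbd θ hθ
      have hbe : (b / 2) * (η ^ 2 / 4) = c2 * n := by
        rw [hbdef, hc2def]; field_simp; ring
      nlinarith [mul_le_mul_of_nonneg_left h (by positivity : (0:ℝ) ≤ b / 2)]
    -- rewrite the interval integral
    have hexp : ∀ θ : ℝ, -n * (m - θ) ^ 2 / (2 * σ ^ 2) = -b * (θ - m) ^ 2 := by
      intro θ; rw [hbdef]; ring
    have hInt : (∫ θ in (θ₀ - δ)..(θ₀ + δ),
          Real.exp (-n * (m - θ) ^ 2 / (2 * σ ^ 2)) * π₀ θ)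
        = ∫ θ in Jδ, f θ * π₀ θ := by
      rw [intervalIntegral.integral_of_le (by linarith)]
      congr 1
      funext θ
      rw [hexp θ, hfdef]
    -- main quantities
    set A : ℝ := ∫ θ in Jη, f θ * π₀ θ with hAdef
    set Bs : ℝ := ∫ θ in Jδ \ Jη, f θ * π₀ θ with hBsdef
    set T : ℝ := ∫ θ in Jη, f θ with hTdef
    set Tc : ℝ := ∫ θ in Jηᶜ, f θ with hTcdef
    have split1 : (∫ θ in Jδ, f θ * π₀ θ) = A + Bs := by
      have h := integral_diff measurableSet_Ioc hfπint.integrableOn hJsub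
      rw [hBsdef, h, hAdef]
      ring
    have split2 : (∫ θ, f θ) = T + Tc := (integral_add_compl measurableSet_Ioc hfint).symm
    -- bound on Bs
    have hBs0 : 0 ≤ Bs := by
      apply setIntegral_nonneg (measurableSet_Ioc.diff measurableSet_Ioc)
      exact fun θ _ => mul_nonneg (hfnonneg θ) (hπ₀nonneg θ)
    have hBsle : Bs ≤ Real.exp (-(c1 * n)) * Ipi := by
      have h1 : Bs ≤ ∫ θ in Jδ \ Jη, Real.exp (-(c1 * n)) * π₀ θ := by
        apply setIntegral_mono_on hfπint.integrableOn
          ((hπ₀int.const_mul _).integrableOn) (measurableSet_Ioc.diff measurableSet_Ioc)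
        intro θ hθ
        exact mul_le_mul_of_nonneg_right (hfbd1 θ hθ.2) (hπ₀nonneg θ)
      have h2 : (∫ θ in Jδ \ Jη, Real.exp (-(c1 * n)) * π₀ θ)
          = Real.exp (-(c1 * n)) * ∫ θ in Jδ \ Jη, π₀ θ := integral_const_mul _ _
      have h3 : (∫ θ in Jδ \ Jη, π₀ θ) ≤ Ipi :=
        setIntegral_le_integral hπ₀int (ae_of_all _ hπ₀nonneg)
      calc Bs ≤ Real.exp (-(c1 * n)) * ∫ θ in Jδ \ Jη, π₀ θ := by rw [← h2]; exact h1
      _ ≤ Real.exp (-(c1 * n)) * Ipi := mul_le_mul_of_nonneg_left h3 (Real.exp_pos _).le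
    -- bound on Tc
    have hTc0 : 0 ≤ Tc := by
      apply setIntegral_nonneg measurableSet_Ioc.compl
      exact fun θ _ => hfnonneg θ
    have hhalfint : Integrable (fun θ : ℝ => Real.exp (-(b / 2) * (θ - m) ^ 2)) :=
      gauss_shift_integrable (by positivity) m
    have hTcle : Tc ≤ Real.exp (-(c2 * n)) * Real.sqrt (π / (b / 2)) := by
      have h1 : Tc ≤ ∫ θ in Jηᶜ, Real.exp (-(c2 * n)) * Real.exp (-(b / 2) * (θ - m) ^ 2) := by
        apply setIntegral_mono_on hfint.integrableOn
          ((hhalfint.const_mul _).integrableOn) measurableSet_Ioc.compl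
        intro θ hθ
        exact hfbd2 θ hθ
      have h2 : (∫ θ in Jηᶜ, Real.exp (-(c2 * n)) * Real.exp (-(b / 2) * (θ - m) ^ 2))
          ≤ ∫ θ : ℝ, Real.exp (-(c2 * n)) * Real.exp (-(b / 2) * (θ - m) ^ 2) := by
        apply setIntegral_le_integral (hhalfint.const_mul _)
        filter_upwards with θ
        positivity
      have h3 : (∫ θ : ℝ, Real.exp (-(c2 * n)) * Real.exp (-(b / 2) * (θ - m) ^ 2))
          = Real.exp (-(c2 * n)) * Real.sqrt (π / (b / 2)) := by
        rw [integral_const_mul, gauss_shift_integral]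
      linarith
    have hsqrt2 : s * Real.sqrt (π / (b / 2)) = 2 * σ * Real.sqrt π := by
      have h1 : π / (b / 2) = (2 * σ) ^ 2 * π / n := by
        rw [hbdef]; field_simp
      rw [h1, Real.sqrt_div (by positivity) n, Real.sqrt_mul (by positivity),
        Real.sqrt_sq (by positivity), ← hsdef]
      field_simp
    -- middle bound
    have hTle : T ≤ C / s := by
      have h1 : T ≤ ∫ θ, f θ := setIntegral_le_integral hfint (ae_of_all _ hfnonneg)
      have h2 : (∫ θ, f θ) = C / s := by
        rw [← htotal]
        field_simp
      linarith
    have hT0 : 0 ≤ T := setIntegral_nonneg measurableSet_Ioc fun θ _ => hfnonneg θ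
    have hmid : |A - π₀ θ₀ * T| ≤ ε₀ * (C / s) := by
      have heq : A - π₀ θ₀ * T = ∫ θ in Jη, (f θ * π₀ θ - π₀ θ₀ * f θ) := by
        rw [hAdef, hTdef, ← integral_const_mul,
          ← integral_sub hfπint.integrableOn (hfint.integrableOn.const_mul _)]
      rw [heq]
      have habs : |∫ θ in Jη, (f θ * π₀ θ - π₀ θ₀ * f θ)|
          ≤ ∫ θ in Jη, |f θ * π₀ θ - π₀ θ₀ * f θ| := by
        simpa [Real.norm_eq_abs] using
          norm_integral_le_integral_norm (μ := volume.restrict Jη)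
            (fun θ => f θ * π₀ θ - π₀ θ₀ * f θ)
      have hptwise : ∀ θ ∈ Jη, |f θ * π₀ θ - π₀ θ₀ * f θ| ≤ ε₀ * f θ := by
        intro θ hθ
        rw [hJηdef, Set.mem_Ioc] at hθ
        have hdθ : dist θ θ₀ < η' := by
          rw [Real.dist_eq]
          have : |θ - θ₀| ≤ η := abs_le.mpr ⟨by linarith [hθ.1], by linarith [hθ.2]⟩
          linarith
        have hπ : |π₀ θ - π₀ θ₀| ≤ ε₀ := by
          have := hη' hdθ
          rw [Real.dist_eq] at this
          linarith
        calc |f θ * π₀ θ - π₀ θ₀ * f θ| = f θ * |π₀ θ - π₀ θ₀| := by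
              rw [show f θ * π₀ θ - π₀ θ₀ * f θ = f θ * (π₀ θ - π₀ θ₀) by ring,
                abs_mul, abs_of_nonneg (hfnonneg θ)]
        _ ≤ f θ * ε₀ := mul_le_mul_of_nonneg_left hπ (hfnonneg θ)
        _ = ε₀ * f θ := by ring
      have hintabs : (∫ θ in Jη, |f θ * π₀ θ - π₀ θ₀ * f θ|) ≤ ∫ θ in Jη, ε₀ * f θ := by
        apply setIntegral_mono_on
          ((hfπint.sub (hfint.const_mul _)).abs.integrableOn)
          ((hfint.const_mul _).integrableOn) measurableSet_Ioc hptwise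
      have hconst : (∫ θ in Jη, ε₀ * f θ) = ε₀ * T := by
        rw [hTdef, integral_const_mul]
      have : ε₀ * T ≤ ε₀ * (C / s) := mul_le_mul_of_nonneg_left hTle hε₀pos.le
      calc |∫ θ in Jη, (f θ * π₀ θ - π₀ θ₀ * f θ)| ≤ ∫ θ in Jη, |f θ * π₀ θ - π₀ θ₀ * f θ| :=
            habs
      _ ≤ ∫ θ in Jη, ε₀ * f θ := hintabs
      _ = ε₀ * T := hconst
      _ ≤ ε₀ * (C / s) := this
    -- assemble
    rw [Real.dist_eq, hInt, split1]
    have hTC : s * T - C = -(s * Tc) := by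
      have : s * (T + Tc) = C := by rw [← split2]; exact htotal
      nlinarith
    have hdecomp : s * (A + Bs) - σ * Real.sqrt (2 * π) * π₀ θ₀
        = s * Bs + s * (A - π₀ θ₀ * T) + π₀ θ₀ * (s * T - C) := by
      rw [hCdef]
      ring
    rw [hdecomp]
    have habs3 : |s * Bs + s * (A - π₀ θ₀ * T) + π₀ θ₀ * (s * T - C)|
        ≤ s * Bs + s * |A - π₀ θ₀ * T| + π₀ θ₀ * (s * Tc) := by
      rw [hTC]
      have h1 : |s * Bs| = s * Bs := abs_of_nonneg (mul_nonneg hs.le hBs0)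
      have h2 : |s * (A - π₀ θ₀ * T)| = s * |A - π₀ θ₀ * T| := by
        rw [abs_mul, abs_of_pos hs]
      have h3 : |π₀ θ₀ * -(s * Tc)| = π₀ θ₀ * (s * Tc) := by
        rw [abs_mul, abs_neg, abs_of_nonneg (hπ₀nonneg θ₀),
          abs_of_nonneg (mul_nonneg hs.le hTc0)]
      calc |s * Bs + s * (A - π₀ θ₀ * T) + π₀ θ₀ * -(s * Tc)|
          ≤ |s * Bs + s * (A - π₀ θ₀ * T)| + |π₀ θ₀ * -(s * Tc)| := abs_add_le _ _
      _ ≤ |s * Bs| + |s * (A - π₀ θ₀ * T)| + |π₀ θ₀ * -(s * Tc)| := by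
          linarith [abs_add_le (s * Bs) (s * (A - π₀ θ₀ * T))]
      _ = s * Bs + s * |A - π₀ θ₀ * T| + π₀ θ₀ * (s * Tc) := by rw [h1, h2, h3]
    have hb1 : s * Bs ≤ R1 n := by
      rw [hR1def]
      simp only
      rw [← hsdef]
      calc s * Bs ≤ s * (Real.exp (-(c1 * n)) * Ipi) :=
        mul_le_mul_of_nonneg_left hBsle hs.le
      _ = s * Real.exp (-(c1 * n)) * Ipi := by ring
    have hb2 : s * |A - π₀ θ₀ * T| ≤ ε / 6 := by
      have h := mul_le_mul_of_nonneg_left hmid hs.le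
      have heq : s * (ε₀ * (C / s)) = ε₀ * C := by
        field_simp
      rw [heq] at h
      have : ε₀ * C = ε / 6 := by
        rw [hε₀def]
        field_simp
      linarith
    have hb3 : π₀ θ₀ * (s * Tc) ≤ R3 n := by
      rw [hR3def]
      simp only
      have h1 : s * Tc ≤ s * (Real.exp (-(c2 * n)) * Real.sqrt (π / (b / 2))) :=
        mul_le_mul_of_nonneg_left hTcle hs.le
      have h2 : s * (Real.exp (-(c2 * n)) * Real.sqrt (π / (b / 2)))
          = (2 * σ * Real.sqrt π) * Real.exp (-(c2 * n)) := by
        rw [show s * (Real.exp (-(c2 * n)) * Real.sqrt (π / (b / 2)))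
            = (s * Real.sqrt (π / (b / 2))) * Real.exp (-(c2 * n)) by ring, hsqrt2]
      have h3 : π₀ θ₀ * (s * Tc) ≤ π₀ θ₀ * ((2 * σ * Real.sqrt π) * Real.exp (-(c2 * n))) := by
        apply mul_le_mul_of_nonneg_left _ (hπ₀nonneg θ₀)
        rw [← h2]; exact h1
      linarith [h3]
    calc |s * Bs + s * (A - π₀ θ₀ * T) + π₀ θ₀ * (s * T - C)|
        ≤ s * Bs + s * |A - π₀ θ₀ * T| + π₀ θ₀ * (s * Tc) := habs3
    _ ≤ R1 n + (ε / 6) + R3 n := by linarith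
    _ = ε / 6 + (R1 n + R3 n) := by ring
  filter_upwards [hkey, hsmall] with n h1 h2
  exact lt_of_le_of_lt h1 h2
end

section
/- Let σ > 0, δ > 0, z ∈ ℝ, θ₀ ∈ ℝ. Let π₀ : ℝ → ℝ be nonnegative, integrable, continuous at θ₀ with π₀(θ₀) > 0, and let π₁ : ℝ → ℝ be nonnegative and integrable. Set x̄ₙ = θ₀ + z·σ/√n and Lₙ(θ) = exp(−n·(x̄ₙ − θ)²/(2σ²)). Then the interval-null Bayes factor B₀₁(n) = (∫_{θ₀−δ}^{θ₀+δ} Lₙ(θ)·π₀(θ) dθ) / (∫_{|θ−θ₀|>δ} Lₙ(θ)·π₁(θ) dθ) tends to +∞ as n → ∞ (with the convention that the ratio is +∞ when the denominator is 0 and the numerator is positive). -/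
open Real Filter MeasureTheory

/-- With σ > 0, δ > 0, z ∈ ℝ, θ₀ ∈ ℝ, π₀ nonnegative, integrable, continuous
at θ₀ with π₀(θ₀) > 0, π₁ nonnegative and integrable, x̄ₙ = θ₀ + z·σ/√n and
Lₙ(θ) = exp(−n·(x̄ₙ − θ)²/(2σ²)), the interval-null Bayes factor
B₀₁(n) = (∫_{θ₀−δ}^{θ₀+δ} Lₙ·π₀) / (∫_{|θ−θ₀|>δ} Lₙ·π₁) tends to +∞ as n → ∞.
The quotient is taken in ℝ≥0∞ (via `ENNReal.ofReal`), so that the ratio is +∞ whenever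
the denominator is 0 and the numerator is positive, as in the stated convention. -/
theorem interval_null_bayes_factor_tendsto_top (σ δ z θ₀ : ℝ)
    (hσ : 0 < σ) (hδ : 0 < δ) (π₀ π₁ : ℝ → ℝ)
    (hπ₀nonneg : ∀ θ, 0 ≤ π₀ θ) (hπ₀int : Integrable π₀)
    (hπ₀cont : ContinuousAt π₀ θ₀) (hπ₀pos : 0 < π₀ θ₀)
    (hπ₁nonneg : ∀ θ, 0 ≤ π₁ θ) (hπ₁int : Integrable π₁) :
    Tendsto (fun n : ℝ =>
        ENNReal.ofReal (∫ θ in (θ₀ - δ)..(θ₀ + δ),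
            Real.exp (-n * ((θ₀ + z * σ / Real.sqrt n) - θ) ^ 2 / (2 * σ ^ 2)) * π₀ θ) /
        ENNReal.ofReal (∫ θ in {θ : ℝ | δ < |θ - θ₀|},
            Real.exp (-n * ((θ₀ + z * σ / Real.sqrt n) - θ) ^ 2 / (2 * σ ^ 2)) * π₁ θ))
      atTop (nhds (⊤ : ENNReal)) := by
  set p := π₀ θ₀ with hp
  -- continuity: a ball where π₀ ≥ p/2
  obtain ⟨ε, hε, hball⟩ := Metric.continuousAt_iff.mp hπ₀cont (p / 2) (by positivity)
  set η : ℝ := min (ε / 2) (δ / 8) with hηdef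
  have hη0 : 0 < η := lt_min (by linarith) (by linarith)
  have hηδ8 : η ≤ δ / 8 := min_le_right _ _
  have hπ₀lb : ∀ θ, |θ - θ₀| ≤ η → p / 2 ≤ π₀ θ := by
    intro θ hθ
    have hd : dist θ θ₀ < ε := by
      rw [Real.dist_eq]
      have := min_le_left (ε / 2) (δ / 8)
      linarith
    have := hball hd
    rw [Real.dist_eq] at this
    have := abs_lt.mp this
    linarith [this.1]
  set a : ℝ := 2 * η ^ 2 / σ ^ 2 with ha
  set b : ℝ := δ ^ 2 / (8 * σ ^ 2) with hb
  have hab : a < b := by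
    have hη2 : η ^ 2 ≤ (δ / 8) ^ 2 := pow_le_pow_left₀ hη0.le hηδ8 2
    rw [ha, hb, div_lt_div_iff₀ (by positivity) (by positivity)]
    nlinarith [mul_le_mul_of_nonneg_right hη2 (sq_nonneg σ), mul_pos (pow_pos hδ 2) (pow_pos hσ 2)]
  set B : ℝ := (∫ θ, π₁ θ) + 1 with hB
  have hBpos : 0 < B := by
    have : 0 ≤ ∫ θ, π₁ θ := integral_nonneg hπ₁nonneg
    rw [hB]; linarith
  set A : ℝ := η * p with hA
  have hApos : 0 < A := mul_pos hη0 hπ₀pos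
  -- the comparison lower bound function
  set g : ℝ → ENNReal := fun n => ENNReal.ofReal ((A / B) * Real.exp ((b - a) * n)) with hg
  have hgtop : Tendsto g atTop (nhds ⊤) := by
    apply ENNReal.tendsto_ofReal_atTop.comp
    exact (Real.tendsto_exp_atTop.comp ((tendsto_id (α := ℝ)).const_mul_atTop
      (by linarith))).const_mul_atTop (by positivity)
  refine tendsto_nhds_top_mono hgtop ?_
  -- eventual bound on the shift term
  have hev : ∀ᶠ n : ℝ in atTop, |z * σ / Real.sqrt n| ≤ min η (δ / 2) ∧ 0 < n := by
    have hm : 0 < min η (δ / 2) := lt_min hη0 (by linarith)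
    filter_upwards [eventually_ge_atTop (max 1 ((|z| * σ / min η (δ / 2)) ^ 2)),
      eventually_gt_atTop (0 : ℝ)] with n hn hn0
    refine ⟨?_, hn0⟩
    have h1 : (1 : ℝ) ≤ n := le_trans (le_max_left _ _) hn
    have hsq : (|z| * σ / min η (δ / 2)) ^ 2 ≤ n := le_trans (le_max_right _ _) hn
    have hsn : 0 < Real.sqrt n := Real.sqrt_pos.mpr hn0
    have hzs : |z| * σ / min η (δ / 2) ≤ Real.sqrt n := by
      rcases le_or_gt (|z| * σ / min η (δ / 2)) 0 with h | h
      · exact h.trans hsn.le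
      · calc |z| * σ / min η (δ / 2)
            = Real.sqrt ((|z| * σ / min η (δ / 2)) ^ 2) := (Real.sqrt_sq h.le).symm
          _ ≤ Real.sqrt n := Real.sqrt_le_sqrt hsq
    have habs : |z * σ / Real.sqrt n| = |z| * σ / Real.sqrt n := by
      rw [abs_div, abs_mul, abs_of_pos hσ, abs_of_pos hsn]
    rw [habs, div_le_iff₀ hsn]
    calc |z| * σ = (|z| * σ / min η (δ / 2)) * min η (δ / 2) := by field_simp
      _ ≤ Real.sqrt n * min η (δ / 2) := by
          exact mul_le_mul_of_nonneg_right hzs hm.le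
      _ = min η (δ / 2) * Real.sqrt n := by ring
  filter_upwards [hev] with n hn
  obtain ⟨hw, hn0⟩ := hn
  have hwη : |z * σ / Real.sqrt n| ≤ η := hw.trans (min_le_left _ _)
  have hwδ : |z * σ / Real.sqrt n| ≤ δ / 2 := hw.trans (min_le_right _ _)
  set w : ℝ := z * σ / Real.sqrt n with hwdef
  set L : ℝ → ℝ := fun θ => Real.exp (-n * ((θ₀ + w) - θ) ^ 2 / (2 * σ ^ 2)) with hL
  have hLcont : Continuous L := by
    apply Real.continuous_exp.comp
    fun_prop
  have hLle1 : ∀ θ, ‖L θ‖ ≤ 1 := by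
    intro θ
    rw [Real.norm_eq_abs, abs_of_pos (Real.exp_pos _)]
    rw [Real.exp_le_one_iff]
    have : 0 ≤ n * ((θ₀ + w) - θ) ^ 2 := by positivity
    rw [div_nonpos_iff]
    right
    constructor
    · linarith
    · positivity
  have hLπ₀ : Integrable (fun θ => L θ * π₀ θ) :=
    hπ₀int.bdd_mul hLcont.aestronglyMeasurable (Filter.Eventually.of_forall hLle1)
  have hLπ₁ : Integrable (fun θ => L θ * π₁ θ) :=
    hπ₁int.bdd_mul hLcont.aestronglyMeasurable (Filter.Eventually.of_forall hLle1)
  -- numerator lower bound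
  have hnum : A * Real.exp (-(a * n)) ≤
      ∫ θ in (θ₀ - δ)..(θ₀ + δ), L θ * π₀ θ := by
    have step1 : ∫ θ in (θ₀ - η)..(θ₀ + η), (Real.exp (-(a * n)) * (p / 2)) ≤
        ∫ θ in (θ₀ - η)..(θ₀ + η), L θ * π₀ θ := by
      apply intervalIntegral.integral_mono_on (by linarith)
        intervalIntegrable_const hLπ₀.intervalIntegrable
      intro θ hθ
      obtain ⟨hθ1, hθ2⟩ := hθ
      have habs : |θ - θ₀| ≤ η := abs_le.mpr ⟨by linarith, by linarith⟩
      have hLlb : Real.exp (-(a * n)) ≤ L θ := by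
        rw [hL]
        apply Real.exp_le_exp.mpr
        have hsq : ((θ₀ + w) - θ) ^ 2 ≤ (2 * η) ^ 2 := by
          have h1 : |(θ₀ + w) - θ| ≤ 2 * η := by
            have : (θ₀ + w) - θ = w + (θ₀ - θ) := by ring
            rw [this]
            calc |w + (θ₀ - θ)| ≤ |w| + |θ₀ - θ| := abs_add_le _ _
              _ ≤ η + η := by
                  rw [abs_sub_comm]
                  exact add_le_add hwη habs
              _ = 2 * η := by ring
          calc ((θ₀ + w) - θ) ^ 2 = |(θ₀ + w) - θ| ^ 2 := (sq_abs _).symm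
            _ ≤ (2 * η) ^ 2 := by
                apply pow_le_pow_left₀ (abs_nonneg _) h1
        have h1 : -n * ((θ₀ + w) - θ) ^ 2 / (2 * σ ^ 2) =
            -(n * ((θ₀ + w) - θ) ^ 2 / (2 * σ ^ 2)) := by ring
        have h2 : a * n = 2 * η ^ 2 * n / σ ^ 2 := by rw [ha]; ring
        rw [h1, h2, neg_le_neg_iff, div_le_div_iff₀ (by positivity) (by positivity)]
        have key := mul_le_mul_of_nonneg_right
          (mul_le_mul_of_nonneg_left hsq hn0.le) (sq_nonneg σ)
        linarith [key]
      exact mul_le_mul hLlb (hπ₀lb θ habs) (by positivity) ((Real.exp_pos _).le.trans hLlb)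
    have step2 : ∫ θ in (θ₀ - η)..(θ₀ + η), L θ * π₀ θ ≤
        ∫ θ in (θ₀ - δ)..(θ₀ + δ), L θ * π₀ θ := by
      apply intervalIntegral.integral_mono_interval (by linarith) (by linarith) (by linarith)
      · filter_upwards with θ
        exact mul_nonneg (Real.exp_pos _).le (hπ₀nonneg θ)
      · exact hLπ₀.intervalIntegrable
    have hconst : ∫ θ in (θ₀ - η)..(θ₀ + η), (Real.exp (-(a * n)) * (p / 2)) =
        2 * η * (Real.exp (-(a * n)) * (p / 2)) := by
      rw [intervalIntegral.integral_const, smul_eq_mul]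
      ring_nf
    calc A * Real.exp (-(a * n)) = 2 * η * (Real.exp (-(a * n)) * (p / 2)) := by rw [hA]; ring
      _ ≤ ∫ θ in (θ₀ - η)..(θ₀ + η), L θ * π₀ θ := by rw [← hconst]; exact step1
      _ ≤ _ := step2
  -- denominator upper bound
  have hden : ∫ θ in {θ : ℝ | δ < |θ - θ₀|}, L θ * π₁ θ ≤ B * Real.exp (-(b * n)) := by
    have hS : MeasurableSet {θ : ℝ | δ < |θ - θ₀|} := by
      apply measurableSet_lt measurable_const
      exact (measurable_id.sub_const θ₀).abs
    have step1 : ∫ θ in {θ : ℝ | δ < |θ - θ₀|}, L θ * π₁ θ ≤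
        ∫ θ in {θ : ℝ | δ < |θ - θ₀|}, Real.exp (-(b * n)) * π₁ θ := by
      apply setIntegral_mono_on hLπ₁.integrableOn
        ((hπ₁int.const_mul _).integrableOn) hS
      intro θ hθ
      have hθδ : δ < |θ - θ₀| := hθ
      have hLub : L θ ≤ Real.exp (-(b * n)) := by
        rw [hL]
        apply Real.exp_le_exp.mpr
        have hsq : (δ / 2) ^ 2 ≤ ((θ₀ + w) - θ) ^ 2 := by
          have h1 : δ / 2 ≤ |(θ₀ + w) - θ| := by
            have he : (θ₀ + w) - θ = w - (θ - θ₀) := by ring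
            rw [he]
            have := abs_sub_abs_le_abs_sub (θ - θ₀) w
            have h2 : |(θ - θ₀) - w| = |w - (θ - θ₀)| := abs_sub_comm _ _
            linarith [abs_sub_abs_le_abs_sub (θ - θ₀) w, h2 ▸ this]
          calc (δ / 2) ^ 2 ≤ |(θ₀ + w) - θ| ^ 2 := by
                apply pow_le_pow_left₀ (by linarith) h1
            _ = ((θ₀ + w) - θ) ^ 2 := sq_abs _
        have h1 : -n * ((θ₀ + w) - θ) ^ 2 / (2 * σ ^ 2) =
            -(n * ((θ₀ + w) - θ) ^ 2 / (2 * σ ^ 2)) := by ring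
        have h2 : b * n = δ ^ 2 * n / (8 * σ ^ 2) := by rw [hb]; ring
        rw [h1, h2, neg_le_neg_iff, div_le_div_iff₀ (by positivity) (by positivity)]
        have key := mul_le_mul_of_nonneg_right
          (mul_le_mul_of_nonneg_left hsq hn0.le) (sq_nonneg σ)
        linarith [key]
      exact mul_le_mul_of_nonneg_right hLub (hπ₁nonneg θ)
    have step2 : ∫ θ in {θ : ℝ | δ < |θ - θ₀|}, Real.exp (-(b * n)) * π₁ θ =
        Real.exp (-(b * n)) * ∫ θ in {θ : ℝ | δ < |θ - θ₀|}, π₁ θ :=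
      integral_const_mul _ _
    have step3 : ∫ θ in {θ : ℝ | δ < |θ - θ₀|}, π₁ θ ≤ ∫ θ, π₁ θ :=
      setIntegral_le_integral hπ₁int (Filter.Eventually.of_forall hπ₁nonneg)
    calc ∫ θ in {θ : ℝ | δ < |θ - θ₀|}, L θ * π₁ θ
        ≤ Real.exp (-(b * n)) * ∫ θ in {θ : ℝ | δ < |θ - θ₀|}, π₁ θ := by
          rw [← step2]; exact step1
      _ ≤ Real.exp (-(b * n)) * B := by
          apply mul_le_mul_of_nonneg_left _ (Real.exp_pos _).le
          rw [hB]; linarith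
      _ = B * Real.exp (-(b * n)) := by ring
  -- combine in ENNReal
  have hdiv : ENNReal.ofReal (A * Real.exp (-(a * n))) /
      ENNReal.ofReal (B * Real.exp (-(b * n))) ≤
      ENNReal.ofReal (∫ θ in (θ₀ - δ)..(θ₀ + δ), L θ * π₀ θ) /
      ENNReal.ofReal (∫ θ in {θ : ℝ | δ < |θ - θ₀|}, L θ * π₁ θ) :=
    ENNReal.div_le_div (ENNReal.ofReal_le_ofReal hnum) (ENNReal.ofReal_le_ofReal hden)
  have heq : ENNReal.ofReal (A * Real.exp (-(a * n))) /
      ENNReal.ofReal (B * Real.exp (-(b * n))) =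
      ENNReal.ofReal ((A / B) * Real.exp ((b - a) * n)) := by
    have hre : A * Real.exp (-(a * n)) / (B * Real.exp (-(b * n))) =
        (A / B) * Real.exp ((b - a) * n) := by
      have hsplit : Real.exp (-(a * n)) =
          Real.exp ((b - a) * n) * Real.exp (-(b * n)) := by
        rw [← Real.exp_add]; ring_nf
      rw [hsplit]
      field_simp
    rw [← ENNReal.ofReal_div_of_pos
      (show (0:ℝ) < B * Real.exp (-(b * n)) by positivity), hre]
  have hfinal := heq ▸ hdiv
  exact hfinal
end

section
/- Under the hypotheses of the interval-null asymptotic theorem (σ > 0, δ > 0, z ∈ ℝ, π₀ nonnegative, integrable, continuous and positive at θ₀, π₁ nonnegative and integrable, x̄ₙ = θ₀ + z·σ/√n, Lₙ(θ) = exp(−n·(x̄ₙ − θ)²/(2σ²))), and for every prior probability c ∈ (0,1) of H₀, the posterior probability c·B₀₁(n) / (c·B₀₁(n) + (1 − c)) converges to 1 as n → ∞, where B₀₁(n) = (∫_{θ₀−δ}^{θ₀+δ} Lₙ·π₀) / (∫_{|θ−θ₀|>δ} Lₙ·π₁). -/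
open Real Filter MeasureTheory

lemma aux_sqrt_mul_exp (k : ℝ) (hk : 0 < k) :
    Tendsto (fun n : ℝ => Real.sqrt n * Real.exp (-(k * n))) atTop (nhds 0) := by
  have h1 : Tendsto (fun n : ℝ => n * Real.exp (-(k * n))) atTop (nhds 0) := by
    have h2 : Tendsto (fun y : ℝ => k⁻¹ * (y * Real.exp (-y))) atTop (nhds 0) := by
      have := (Real.tendsto_pow_mul_exp_neg_atTop_nhds_zero 1).const_mul k⁻¹
      simpa using this
    have h3 : Tendsto (fun n : ℝ => k * n) atTop atTop :=
      Tendsto.const_mul_atTop hk tendsto_id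
    have := h2.comp h3
    refine this.congr fun n => ?_
    simp only [Function.comp_apply]
    field_simp
  refine squeeze_zero' ?_ ?_ h1
  · filter_upwards [eventually_ge_atTop (0:ℝ)] with n hn
    positivity
  · filter_upwards [eventually_ge_atTop (1:ℝ)] with n hn
    have : Real.sqrt n ≤ n := by
      nlinarith [Real.sq_sqrt (by linarith : (0:ℝ) ≤ n), Real.sqrt_nonneg n]
    exact mul_le_mul_of_nonneg_right this (Real.exp_pos _).le


set_option maxHeartbeats 1000000 in
/-- Under the hypotheses of the interval-null asymptotic theorem and for every
prior probability c ∈ (0,1) of H₀, the posterior probability c·B₀₁(n)/(c·B₀₁(n) + (1 − c))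
converges to 1 as n → ∞, where B₀₁(n) = (∫_{θ₀−δ}^{θ₀+δ} Lₙ·π₀)/(∫_{|θ−θ₀|>δ} Lₙ·π₁).
Writing num(n) and den(n) for the two integrals, the posterior probability
c·B₀₁/(c·B₀₁ + (1 − c)) is expressed in the equivalent form
c·num/(c·num + (1 − c)·den), which agrees with it whenever den > 0 and equals 1 when
den = 0 and num > 0, matching the convention B₀₁ = +∞ in that case. -/
theorem interval_null_posterior_tendsto_one (σ δ z θ₀ c : ℝ)
    (hσ : 0 < σ) (hδ : 0 < δ) (hc : c ∈ Set.Ioo (0 : ℝ) 1) (π₀ π₁ : ℝ → ℝ)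
    (hπ₀nonneg : ∀ θ, 0 ≤ π₀ θ) (hπ₀int : Integrable π₀)
    (hπ₀cont : ContinuousAt π₀ θ₀) (hπ₀pos : 0 < π₀ θ₀)
    (hπ₁nonneg : ∀ θ, 0 ≤ π₁ θ) (hπ₁int : Integrable π₁) :
    Tendsto (fun n : ℝ =>
        c * (∫ θ in (θ₀ - δ)..(θ₀ + δ),
            Real.exp (-n * ((θ₀ + z * σ / Real.sqrt n) - θ) ^ 2 / (2 * σ ^ 2)) * π₀ θ) /
        (c * (∫ θ in (θ₀ - δ)..(θ₀ + δ),
            Real.exp (-n * ((θ₀ + z * σ / Real.sqrt n) - θ) ^ 2 / (2 * σ ^ 2)) * π₀ θ) +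
          (1 - c) * ∫ θ in {θ : ℝ | δ < |θ - θ₀|},
            Real.exp (-n * ((θ₀ + z * σ / Real.sqrt n) - θ) ^ 2 / (2 * σ ^ 2)) * π₁ θ))
      atTop (nhds 1) := by
  obtain ⟨hc0, hc1⟩ := hc
  -- continuity neighborhood
  obtain ⟨ε, hε, hball⟩ : ∃ ε > 0, ∀ θ, |θ - θ₀| ≤ ε → π₀ θ₀ / 2 ≤ π₀ θ := by
    obtain ⟨d, hd, h⟩ := Metric.continuousAt_iff.mp hπ₀cont (π₀ θ₀ / 2) (by positivity)
    refine ⟨d/2, by positivity, fun θ hθ => ?_⟩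
    have h2 := h (show dist θ θ₀ < d by rw [Real.dist_eq]; linarith)
    rw [Real.dist_eq] at h2
    have := abs_lt.mp h2
    linarith [this.1]
  set a : ℝ := σ * Real.exp (-(1/2)) * π₀ θ₀ with ha_def
  have ha : 0 < a := by positivity
  set I₁ : ℝ := ∫ θ, π₁ θ with hI₁_def
  have hI₁ : 0 ≤ I₁ := integral_nonneg hπ₁nonneg
  set k : ℝ := δ^2/(8*σ^2) with hk_def
  have hk : 0 < k := by positivity
  set K : ℝ := (1-c)/c with hK_def
  have hK : 0 ≤ K := div_nonneg (by linarith) hc0.le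
  set R : ℝ → ℝ := fun n => I₁/a * (Real.sqrt n * Real.exp (-(k * n))) with hR_def
  have hR : Tendsto R atTop (nhds 0) := by
    have := (aux_sqrt_mul_exp k hk).const_mul (I₁/a)
    simpa using this
  have hL : Tendsto (fun n => 1 / (1 + K * R n)) atTop (nhds 1) := by
    have h1 : Tendsto (fun n => 1 + K * R n) atTop (nhds 1) := by
      have := (hR.const_mul K).const_add 1
      simpa using this
    have := h1.inv₀ (by norm_num)
    simpa using this
  -- eventual conditions
  have hsq : Tendsto (fun n : ℝ => Real.sqrt n) atTop atTop := by
    rw [tendsto_atTop_atTop]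
    intro b
    refine ⟨b^2, fun n hn => ?_⟩
    calc b ≤ |b| := le_abs_self b
      _ = Real.sqrt (b^2) := (Real.sqrt_sq_eq_abs b).symm
      _ ≤ Real.sqrt n := Real.sqrt_le_sqrt hn
  have hev1 : ∀ᶠ n : ℝ in atTop, (|z|+1)*σ/Real.sqrt n < min δ ε := by
    have h0 : Tendsto (fun n : ℝ => (|z|+1)*σ/Real.sqrt n) atTop (nhds 0) :=
      tendsto_const_nhds.div_atTop hsq
    exact h0.eventually (gt_mem_nhds (lt_min hδ hε))
  have hev2 : ∀ᶠ n : ℝ in atTop, |z| * σ/Real.sqrt n < δ/2 := by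
    have h0 : Tendsto (fun n : ℝ => |z| * σ/Real.sqrt n) atTop (nhds 0) :=
      tendsto_const_nhds.div_atTop hsq
    exact h0.eventually (gt_mem_nhds (by positivity))
  have key : ∀ᶠ n : ℝ in atTop,
      (1 / (1 + K * R n) ≤
        c * (∫ θ in (θ₀ - δ)..(θ₀ + δ),
            Real.exp (-n * ((θ₀ + z * σ / Real.sqrt n) - θ) ^ 2 / (2 * σ ^ 2)) * π₀ θ) /
        (c * (∫ θ in (θ₀ - δ)..(θ₀ + δ),
            Real.exp (-n * ((θ₀ + z * σ / Real.sqrt n) - θ) ^ 2 / (2 * σ ^ 2)) * π₀ θ) +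
          (1 - c) * ∫ θ in {θ : ℝ | δ < |θ - θ₀|},
            Real.exp (-n * ((θ₀ + z * σ / Real.sqrt n) - θ) ^ 2 / (2 * σ ^ 2)) * π₁ θ)) ∧
      (c * (∫ θ in (θ₀ - δ)..(θ₀ + δ),
            Real.exp (-n * ((θ₀ + z * σ / Real.sqrt n) - θ) ^ 2 / (2 * σ ^ 2)) * π₀ θ) /
        (c * (∫ θ in (θ₀ - δ)..(θ₀ + δ),
            Real.exp (-n * ((θ₀ + z * σ / Real.sqrt n) - θ) ^ 2 / (2 * σ ^ 2)) * π₀ θ) +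
          (1 - c) * ∫ θ in {θ : ℝ | δ < |θ - θ₀|},
            Real.exp (-n * ((θ₀ + z * σ / Real.sqrt n) - θ) ^ 2 / (2 * σ ^ 2)) * π₁ θ) ≤ 1) := by
    filter_upwards [hev1, hev2, eventually_ge_atTop (1:ℝ)] with n h1 h2 hn1
    have hn0 : (0:ℝ) < n := by linarith
    set s : ℝ := Real.sqrt n with hs_def
    have hs0 : 0 < s := Real.sqrt_pos.mpr hn0
    have hs2 : s^2 = n := Real.sq_sqrt hn0.le
    set m : ℝ := θ₀ + z * σ / s with hm_def
    have hmθ : |m - θ₀| = |z| * σ / s := by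
      rw [hm_def]
      rw [show θ₀ + z * σ / s - θ₀ = z * σ / s by ring]
      rw [abs_div, abs_mul, abs_of_pos hσ, abs_of_pos hs0]
    -- integrability
    have hcont : Continuous (fun θ : ℝ => Real.exp (-n * (m - θ) ^ 2 / (2 * σ ^ 2))) := by
      fun_prop
    have hexpbd : ∀ θ : ℝ, ‖Real.exp (-n * (m - θ) ^ 2 / (2 * σ ^ 2))‖ ≤ 1 := by
      intro θ
      rw [Real.norm_eq_abs, abs_of_pos (Real.exp_pos _)]
      calc Real.exp (-n * (m - θ) ^ 2 / (2 * σ ^ 2)) ≤ Real.exp 0 := by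
            apply Real.exp_le_exp.mpr
            apply div_nonpos_of_nonpos_of_nonneg
            · nlinarith [sq_nonneg (m - θ)]
            · positivity
        _ = 1 := Real.exp_zero
    have hint0 : Integrable (fun θ => Real.exp (-n * (m - θ) ^ 2 / (2 * σ ^ 2)) * π₀ θ) :=
      hπ₀int.bdd_mul hcont.aestronglyMeasurable (Eventually.of_forall hexpbd)
    have hint1 : Integrable (fun θ => Real.exp (-n * (m - θ) ^ 2 / (2 * σ ^ 2)) * π₁ θ) :=
      hπ₁int.bdd_mul hcont.aestronglyMeasurable (Eventually.of_forall hexpbd)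
    -- numerator lower bound
    have hzs : |z| * σ / s + σ / s = (|z|+1) * σ / s := by ring
    have hzσ : |z| * σ / s ≥ 0 := by positivity
    have h1δ : (|z|+1) * σ / s < δ := lt_of_lt_of_le h1 (min_le_left _ _)
    have h1ε : (|z|+1) * σ / s < ε := lt_of_lt_of_le h1 (min_le_right _ _)
    have hσs : (0:ℝ) ≤ σ / s := by positivity
    have hmz : -(|z| * σ / s) ≤ z * σ / s ∧ z * σ / s ≤ |z| * σ / s := by
      constructor
      · rw [mul_div_assoc, mul_div_assoc, ← neg_mul]
        exact mul_le_mul_of_nonneg_right (neg_abs_le z) hσs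
      · rw [mul_div_assoc, mul_div_assoc]
        exact mul_le_mul_of_nonneg_right (le_abs_self z) hσs
    have hnum : a / s ≤ ∫ θ in (θ₀ - δ)..(θ₀ + δ),
        Real.exp (-n * (m - θ) ^ 2 / (2 * σ ^ 2)) * π₀ θ := by
      have hlo : θ₀ - δ ≤ m - σ/s := by
        have := hmz.1
        rw [hm_def]
        have : -( |z| * σ / s) ≤ z * σ / s := hmz.1
        nlinarith [hzs]
      have hhi : m + σ/s ≤ θ₀ + δ := by
        rw [hm_def]
        nlinarith [hmz.2]
      have hab : m - σ/s ≤ m + σ/s := by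
        have : 0 < σ/s := by positivity
        linarith
      have hstep1 : ∫ θ in (m - σ/s)..(m + σ/s),
          Real.exp (-n * (m - θ) ^ 2 / (2 * σ ^ 2)) * π₀ θ ≤
          ∫ θ in (θ₀ - δ)..(θ₀ + δ),
          Real.exp (-n * (m - θ) ^ 2 / (2 * σ ^ 2)) * π₀ θ := by
        apply intervalIntegral.integral_mono_interval hlo hab hhi
        · filter_upwards with θ
          exact mul_nonneg (Real.exp_pos _).le (hπ₀nonneg θ)
        · exact hint0.intervalIntegrable
      have hstep2 : ∫ θ in (m - σ/s)..(m + σ/s),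
          (Real.exp (-(1/2)) * (π₀ θ₀ / 2)) ≤
          ∫ θ in (m - σ/s)..(m + σ/s),
          Real.exp (-n * (m - θ) ^ 2 / (2 * σ ^ 2)) * π₀ θ := by
        apply intervalIntegral.integral_mono_on hab
          (intervalIntegrable_const) (hint0.intervalIntegrable)
        intro θ hθ
        rw [Set.mem_Icc] at hθ
        have habs : |m - θ| ≤ σ/s := by
          rw [abs_le]; constructor <;> linarith [hθ.1, hθ.2]
        have hsq' : n * (m - θ)^2 ≤ σ^2 := by
          have h' : (m - θ)^2 ≤ (σ/s)^2 := by
            have h2 : |m - θ|^2 ≤ (σ/s)^2 := pow_le_pow_left₀ (abs_nonneg _) habs 2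
            rwa [sq_abs] at h2
          have h3 : n * (m - θ)^2 ≤ n * (σ/s)^2 := mul_le_mul_of_nonneg_left h' hn0.le
          have h4 : n * (σ/s)^2 = σ^2 := by
            rw [div_pow, hs2]; field_simp
          exact h3.trans (le_of_eq h4)
        have hexp1 : Real.exp (-(1/2)) ≤ Real.exp (-n * (m - θ) ^ 2 / (2 * σ ^ 2)) := by
          apply Real.exp_le_exp.mpr
          rw [neg_mul, neg_div, neg_le_neg_iff]
          rw [div_le_div_iff₀ (by positivity) (by norm_num : (0:ℝ) < 2)]
          nlinarith [hsq']
        have hθball : |θ - θ₀| ≤ ε := by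
          have : |θ - θ₀| ≤ |θ - m| + |m - θ₀| := by
            calc |θ - θ₀| = |(θ - m) + (m - θ₀)| := by ring_nf
              _ ≤ |θ - m| + |m - θ₀| := abs_add_le _ _
          rw [abs_sub_comm θ m] at this
          rw [hmθ] at this
          linarith [habs, hzs ▸ h1ε]
        have hπθ := hball θ hθball
        calc Real.exp (-(1/2)) * (π₀ θ₀ / 2)
            ≤ Real.exp (-n * (m - θ) ^ 2 / (2 * σ ^ 2)) * (π₀ θ₀ / 2) :=
              mul_le_mul_of_nonneg_right hexp1 (by positivity)
          _ ≤ Real.exp (-n * (m - θ) ^ 2 / (2 * σ ^ 2)) * π₀ θ :=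
              mul_le_mul_of_nonneg_left hπθ (Real.exp_pos _).le
      have hconst : ∫ θ in (m - σ/s)..(m + σ/s),
          (Real.exp (-(1/2)) * (π₀ θ₀ / 2)) = a / s := by
        rw [intervalIntegral.integral_const, smul_eq_mul, ha_def]
        field_simp
        ring
      linarith [hconst ▸ hstep2, hstep1]
    have hnumpos : 0 < ∫ θ in (θ₀ - δ)..(θ₀ + δ),
        Real.exp (-n * (m - θ) ^ 2 / (2 * σ ^ 2)) * π₀ θ :=
      lt_of_lt_of_le (by positivity) hnum
    -- denominator (alternative) upper bound
    have hS : MeasurableSet {θ : ℝ | δ < |θ - θ₀|} :=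
      measurableSet_lt measurable_const (measurable_id.sub measurable_const).abs
    set E : ℝ := Real.exp (-(k * n)) with hE_def
    have hden_le : (∫ θ in {θ : ℝ | δ < |θ - θ₀|},
        Real.exp (-n * (m - θ) ^ 2 / (2 * σ ^ 2)) * π₁ θ) ≤ E * I₁ := by
      have hpt : ∀ θ ∈ {θ : ℝ | δ < |θ - θ₀|},
          Real.exp (-n * (m - θ) ^ 2 / (2 * σ ^ 2)) * π₁ θ ≤ E * π₁ θ := by
        intro θ hθ
        rw [Set.mem_setOf_eq] at hθ
        have habs : δ/2 ≤ |m - θ| := by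
          have h' : |θ - θ₀| ≤ |θ - m| + |m - θ₀| := by
            calc |θ - θ₀| = |(θ - m) + (m - θ₀)| := by ring_nf
              _ ≤ |θ - m| + |m - θ₀| := abs_add_le _ _
          rw [hmθ, abs_sub_comm θ m] at h'
          linarith
        have hsq' : δ^2/4 ≤ (m - θ)^2 := by
          have h2 : (δ/2)^2 ≤ |m - θ|^2 := pow_le_pow_left₀ (by positivity) habs 2
          rw [sq_abs] at h2
          calc δ^2/4 = (δ/2)^2 := by ring
            _ ≤ (m - θ)^2 := h2
        have hexp : Real.exp (-n * (m - θ) ^ 2 / (2 * σ ^ 2)) ≤ E := by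
          rw [hE_def]
          apply Real.exp_le_exp.mpr
          rw [neg_mul, neg_div, neg_le_neg_iff, hk_def]
          rw [div_mul_eq_mul_div, div_le_div_iff₀ (by positivity) (by positivity)]
          have h8 := mul_le_mul_of_nonneg_left hsq'
            (show (0:ℝ) ≤ 8 * n * σ^2 by positivity)
          calc δ^2 * n * (2*σ^2) = 8 * n * σ^2 * (δ^2/4) := by ring
            _ ≤ 8 * n * σ^2 * (m - θ)^2 := h8
            _ = n * (m - θ)^2 * (8*σ^2) := by ring
        exact mul_le_mul_of_nonneg_right hexp (hπ₁nonneg θ)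
      calc (∫ θ in {θ : ℝ | δ < |θ - θ₀|},
            Real.exp (-n * (m - θ) ^ 2 / (2 * σ ^ 2)) * π₁ θ)
          ≤ ∫ θ in {θ : ℝ | δ < |θ - θ₀|}, E * π₁ θ :=
            setIntegral_mono_on hint1.integrableOn
              ((hπ₁int.const_mul E).integrableOn) hS hpt
        _ = E * ∫ θ in {θ : ℝ | δ < |θ - θ₀|}, π₁ θ := by
            rw [integral_const_mul]
        _ ≤ E * I₁ := by
            apply mul_le_mul_of_nonneg_left _ (Real.exp_pos _).le
            exact setIntegral_le_integral hπ₁int (Eventually.of_forall hπ₁nonneg)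
    have hden0 : 0 ≤ ∫ θ in {θ : ℝ | δ < |θ - θ₀|},
        Real.exp (-n * (m - θ) ^ 2 / (2 * σ ^ 2)) * π₁ θ :=
      setIntegral_nonneg hS (fun θ _ => mul_nonneg (Real.exp_pos _).le (hπ₁nonneg θ))
    -- abbreviations
    set N : ℝ := ∫ θ in (θ₀ - δ)..(θ₀ + δ),
        Real.exp (-n * (m - θ) ^ 2 / (2 * σ ^ 2)) * π₀ θ with hN_def
    set D : ℝ := ∫ θ in {θ : ℝ | δ < |θ - θ₀|},
        Real.exp (-n * (m - θ) ^ 2 / (2 * σ ^ 2)) * π₁ θ with hD_def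
    have hdenpos : 0 < c * N + (1 - c) * D := by
      have h1' : 0 < c * N := mul_pos hc0 hnumpos
      have h2' : 0 ≤ (1 - c) * D := mul_nonneg (by linarith) hden0
      linarith
    have hRn : R n = I₁/a * (s * E) := rfl
    have hRpos : 0 ≤ R n := by rw [hRn]; positivity
    have hDN : D ≤ N * R n := by
      have h5 : (a/s) * R n = I₁ * E := by
        rw [hRn]; field_simp
      have h6 : (a/s) * R n ≤ N * R n := mul_le_mul_of_nonneg_right hnum hRpos
      have h7 : E * I₁ = I₁ * E := mul_comm _ _
      linarith
    have hLpos : (0:ℝ) < 1 + K * R n := by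
      have := mul_nonneg hK hRpos
      linarith
    constructor
    · rw [div_le_div_iff₀ hLpos hdenpos]
      calc 1 * (c * N + (1 - c) * D) = c * N + (1 - c) * D := by ring
        _ ≤ c * N + (1 - c) * (N * R n) := by
            have := mul_le_mul_of_nonneg_left hDN (by linarith : (0:ℝ) ≤ 1 - c)
            linarith
        _ = c * N * (1 + K * R n) := by rw [hK_def]; field_simp
    · rw [div_le_one hdenpos]
      have h2' : 0 ≤ (1 - c) * D := mul_nonneg (by linarith) hden0
      linarith
  refine tendsto_of_tendsto_of_tendsto_of_le_of_le' hL tendsto_const_nhds ?_ ?_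
  · exact key.mono fun n h => h.1
  · exact key.mono fun n h => h.2
end
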